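/- Define β_k = k/(k+3), B(k) = [[1+β_{k-1}, -β_{k-1}], [1, 0]], and for 0 ≤ t ≤ k-2 let 𝓑(k,t) = B(k)·B(k-1)···B(k-t), with 𝓑(k,k-1) = I. Then for all integers k ≥ 1 and 0 ≤ t ≤ k-1, the spectral (operator 2-) norm satisfies ‖𝓑(k, k-t-2)‖ ≤ 8·(k-t-1)·(t+1)/k + 5. -/

import Mathlib

open scoped Matrix.Norms.L2Operator

noncomputable def beta (n : ℕ) : ℝ := n / (n + 3)

noncomputable def Bmat (k : ℕ) : Matrix (Fin 2) (Fin 2) ℝ :=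
  !![1 + beta (k - 1), -beta (k - 1); 1, 0]

/-- `Bprod k m` is the ordered product `B(k) B(k-1) ⋯ B(k-m+1)` of `m` factors, so that
`𝓑(k,t) = Bprod k (t+1)` and `𝓑(k,-1) = Bprod k 0 = I`. In particular
`𝓑(k, k-t-2) = Bprod k (k-t-1)`. -/
noncomputable def Bprod (k m : ℕ) : Matrix (Fin 2) (Fin 2) ℝ :=
  ((List.range m).map (fun j => Bmat (k - j))).prod

lemma opNorm_le_of_frob (A : Matrix (Fin 2) (Fin 2) ℝ) (c : ℝ) (hc : 0 ≤ c)
    (h : (A 0 0)^2 + (A 0 1)^2 + (A 1 0)^2 + (A 1 1)^2 ≤ c^2) : ‖A‖ ≤ c := by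
  rw [Matrix.l2_opNorm_def]
  refine ContinuousLinearMap.opNorm_le_bound _ hc fun x => ?_
  have hx : ‖x‖ = Real.sqrt ((x 0)^2 + (x 1)^2) := by
    rw [EuclideanSpace.norm_eq]
    simp [Fin.sum_univ_two, sq_abs, sq]
  have hfx : ‖(Matrix.toEuclideanLin.trans LinearMap.toContinuousLinearMap A) x‖
      = Real.sqrt ((A 0 0 * x 0 + A 0 1 * x 1)^2 + (A 1 0 * x 0 + A 1 1 * x 1)^2) := by
    rw [EuclideanSpace.norm_eq]
    simp [Matrix.toEuclideanLin_apply, Matrix.mulVec, dotProduct, Fin.sum_univ_two,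
      sq_abs, sq]
  rw [hfx, hx]
  rw [← Real.sqrt_mul_self hc, ← Real.sqrt_mul (by positivity)]
  apply Real.sqrt_le_sqrt
  have h1 : (A 0 0 * x 0 + A 0 1 * x 1)^2 ≤ ((A 0 0)^2 + (A 0 1)^2) * ((x 0)^2 + (x 1)^2) := by
    nlinarith [sq_nonneg (A 0 0 * x 1 - A 0 1 * x 0)]
  have h2 : (A 1 0 * x 0 + A 1 1 * x 1)^2 ≤ ((A 1 0)^2 + (A 1 1)^2) * ((x 0)^2 + (x 1)^2) := by
    nlinarith [sq_nonneg (A 1 0 * x 1 - A 1 1 * x 0)]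
  nlinarith [sq_nonneg (x 0), sq_nonneg (x 1), sq_nonneg c]

noncomputable def sAux : ℕ → ℕ → ℝ
  | _, 0 => 0
  | p, (m+1) => beta p * (1 + sAux (p+1) m)

lemma sAux_eq : ∀ (m p : ℕ), sAux p m
    = (p / 2) * (1 - ((p:ℝ)+1)*((p:ℝ)+2) / (((p:ℝ)+m+1)*((p:ℝ)+m+2)))
  | 0, p => by
    simp only [sAux]
    have h1 : ((p:ℝ)+1) ≠ 0 := by positivity
    have h2 : ((p:ℝ)+2) ≠ 0 := by positivity
    field_simp
    push_cast; ring
  | (m+1), p => by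
    have IH := sAux_eq m (p+1)
    simp only [sAux, IH, beta]
    push_cast
    have h1 : ((p:ℝ)+3) ≠ 0 := by positivity
    have h2 : ((p:ℝ)+m+2) ≠ 0 := by positivity
    have h3 : ((p:ℝ)+m+3) ≠ 0 := by positivity
    field_simp
    ring

lemma sAux_nonneg : ∀ (m p : ℕ), 0 ≤ sAux p m
  | 0, p => le_refl 0
  | (m+1), p => by
    have IH := sAux_nonneg m (p+1)
    simp only [sAux, beta]
    positivity

lemma sAux_le (p m : ℕ) : sAux p m ≤ (p:ℝ) * m / ((p:ℝ) + m) := by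
  rcases Nat.eq_zero_or_pos (p + m) with h | h
  · obtain ⟨hp, hm⟩ := Nat.add_eq_zero.mp h
    subst hp; subst hm
    simp [sAux]
  · have hpm : (0:ℝ) < (p:ℝ) + m := by
      have : (0:ℝ) < ((p+m : ℕ) : ℝ) := by exact_mod_cast h
      push_cast at this; linarith
    have key : sAux p m
        = (p:ℝ) * m * ((m:ℝ) + 2*p + 3) / (2 * (((p:ℝ)+m+1)*((p:ℝ)+m+2))) := by
      rw [sAux_eq]
      have h2 : ((p:ℝ)+m+1) ≠ 0 := by positivity
      have h3 : ((p:ℝ)+m+2) ≠ 0 := by positivity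
      field_simp
      ring
    rw [key, div_le_div_iff₀ (by positivity) hpm]
    have hP : (0:ℝ) ≤ p := Nat.cast_nonneg p
    have hM : (0:ℝ) ≤ m := Nat.cast_nonneg m
    nlinarith [mul_nonneg (mul_nonneg hP hM) hM, mul_nonneg (mul_nonneg hP hM) hP,
      mul_nonneg hP hM]

lemma ratio_mono (p m m' : ℕ) (hmm : m' ≤ m) :
    (p:ℝ) * m' / ((p:ℝ) + m') ≤ (p:ℝ) * m / ((p:ℝ) + m) := by
  have hP : (0:ℝ) ≤ p := Nat.cast_nonneg p
  have hM' : (0:ℝ) ≤ m' := Nat.cast_nonneg m'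
  have hmmr : (m':ℝ) ≤ m := by exact_mod_cast hmm
  rcases Nat.eq_zero_or_pos (p + m') with h | h
  · obtain ⟨hp, hm⟩ := Nat.add_eq_zero.mp h
    subst hp; subst hm
    simp
  · have h1 : (0:ℝ) < (p:ℝ) + m' := by
      have : (0:ℝ) < ((p+m' : ℕ) : ℝ) := by exact_mod_cast h
      push_cast at this; linarith
    have h2 : (0:ℝ) < (p:ℝ) + m := by linarith
    rw [div_le_div_iff₀ h1 h2]
    nlinarith [mul_nonneg (mul_nonneg hP hP) (sub_nonneg.mpr hmmr)]

lemma Bprod_succ (k m : ℕ) : Bprod k (m+1) = Bprod k m * Bmat (k - m) := by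
  unfold Bprod
  rw [List.range_succ, List.map_append, List.prod_append, List.map_singleton,
    List.prod_singleton]

lemma Bprod_formula : ∀ (m p : ℕ),
    Bprod (p + (m+1)) (m+1)
      = !![1 + sAux p (m+1), -sAux p (m+1); 1 + sAux p m, -sAux p m]
  | 0, p => by
    have : Bprod (p+1) 1 = Bmat (p+1) := by
      unfold Bprod
      rw [List.range_succ, List.range_zero, List.nil_append, List.map_singleton, List.prod_singleton, Nat.sub_zero]
    rw [this, Bmat]
    have h1 : p + 1 - 1 = p := by omega
    rw [h1]
    ext i j
    fin_cases i <;> fin_cases j <;> simp [sAux] <;> ring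
  | (m+1), p => by
    have IH := Bprod_formula m (p+1)
    have hk : p + (m+2) = (p+1) + (m+1) := by omega
    have hs : (p + (m+2)) - (m+1) = p + 1 := by omega
    rw [Bprod_succ, hs]
    rw [show p + (m + 2) = (p+1) + (m+1) from hk, IH]
    have hb : Bmat (p+1) = !![1 + beta p, -beta p; 1, 0] := by
      rw [Bmat]; congr 2 <;> simp
    rw [hb]
    have hu : sAux p (m+2) = beta p * (1 + sAux (p+1) (m+1)) := rfl
    have hv : sAux p (m+1) = beta p * (1 + sAux (p+1) m) := rfl
    ext i j
    fin_cases i <;> fin_cases j <;>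
      simp [Matrix.mul_apply, Fin.sum_univ_two, hu, hv] <;> ring

theorem stmt_8 (k t : ℕ) (hk : 1 ≤ k) (ht : t ≤ k - 1) :
    ‖Bprod k (k - t - 1)‖ ≤ 8 * ((k : ℝ) - t - 1) * (t + 1) / k + 5 := by
  have htk : t + 1 ≤ k := by omega
  obtain ⟨m, hm⟩ : ∃ m, k - t - 1 = m := ⟨_, rfl⟩
  rw [hm]
  set p := t + 1 with hp
  have hpm : p + m = k := by omega
  have hcastm : ((k:ℝ) - t - 1) = (m : ℝ) := by
    have : (m : ℝ) = ((k : ℝ) - (t+1 : ℕ)) := by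
      rw [eq_sub_iff_add_eq]
      exact_mod_cast congrArg (Nat.cast : ℕ → ℝ) (by omega : m + (t+1) = k)
    rw [this]; push_cast; ring
  have hcastk : (k : ℝ) = (p : ℝ) + m := by exact_mod_cast hpm.symm
  have hcastp : ((t:ℝ) + 1) = (p : ℝ) := by push_cast [hp]; ring
  rw [hcastm, hcastp, hcastk]
  set R : ℝ := (p:ℝ) * m / ((p:ℝ) + m) with hR
  have hRnn : 0 ≤ R := by positivity
  have hgoal : 8 * (m:ℝ) * p / ((p:ℝ) + m) + 5 = 8 * R + 5 := by rw [hR]; ring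
  rw [hgoal]
  rcases Nat.eq_zero_or_pos m with hm0 | hmpos
  · subst hm0
    have : Bprod k 0 = 1 := by unfold Bprod; simp
    rw [this]
    apply opNorm_le_of_frob _ _ (by positivity)
    have e00 : (1 : Matrix (Fin 2) (Fin 2) ℝ) 0 0 = 1 := by simp
    have e01 : (1 : Matrix (Fin 2) (Fin 2) ℝ) 0 1 = 0 := by simp
    have e10 : (1 : Matrix (Fin 2) (Fin 2) ℝ) 1 0 = 0 := by simp
    have e11 : (1 : Matrix (Fin 2) (Fin 2) ℝ) 1 1 = 1 := by simp
    rw [e00, e01, e10, e11]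
    nlinarith [hRnn]
  · obtain ⟨m', rfl⟩ : ∃ m', m = m' + 1 := ⟨m - 1, by omega⟩
    have hform := Bprod_formula m' p
    rw [← hpm, hform]
    set u := sAux p (m'+1) with hu
    set v := sAux p m' with hv
    have hu0 : 0 ≤ u := sAux_nonneg _ _
    have hv0 : 0 ≤ v := sAux_nonneg _ _
    have huR : u ≤ R := by rw [hR]; exact sAux_le p (m'+1)
    have hvR : v ≤ R := by
      rw [hR]
      exact le_trans (sAux_le p m') (ratio_mono p (m'+1) m' (by omega))
    apply opNorm_le_of_frob _ _ (by positivity)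
    have e00 : (!![1 + u, -u; 1 + v, -v] : Matrix (Fin 2) (Fin 2) ℝ) 0 0 = 1 + u := by simp
    have e01 : (!![1 + u, -u; 1 + v, -v] : Matrix (Fin 2) (Fin 2) ℝ) 0 1 = -u := by simp
    have e10 : (!![1 + u, -u; 1 + v, -v] : Matrix (Fin 2) (Fin 2) ℝ) 1 0 = 1 + v := by simp
    have e11 : (!![1 + u, -u; 1 + v, -v] : Matrix (Fin 2) (Fin 2) ℝ) 1 1 = -v := by simp
    rw [e00, e01, e10, e11]
    nlinarith [hRnn, sq_nonneg R, mul_nonneg hRnn hRnn]
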